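/- Let σ = (sl_n)_{n=1}^{|u|} be a slice sequence for a string u, 𝒳 its set of chunks and ≡ the equivalence induced by the ordering ≼ on chunks. Let x = (g, q, i, n) ∈ 𝒳 and put p = n − q. Then there exist indexes j_1 ∈ I_{p+1}, …, j_{|g|} ∈ I_{p+|g|} such that the equivalence class of x is [x] = { (g, s, j_s, p+s) | 1 ≤ s ≤ |g| }. -/

import Mathlib

/-- A guided rewrite sequence for `u`: a list of guide-position pairs `(g, p)`
with `g ∈ G`, `p + |g| ≤ |u|` and `u[p+1, p+|g|] ∼ g`. -/
def IsRewriteSeq {α : Type} (sim : α → α → Prop) (G : Set (List α)) (u : List α)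
    (ρ : List (List α × ℕ)) : Prop :=
  ∀ gp ∈ ρ, gp.1 ∈ G ∧ gp.2 + gp.1.length ≤ u.length ∧
    List.Forall₂ sim ((u.drop gp.2).take gp.1.length) gp.1

/-- Apply a single guided rewrite `(g, p)` to `u`, replacing `u[p+1, p+|g|]` by `g`. -/
def applyRW {α : Type} (u : List α) (gp : List α × ℕ) : List α :=
  u.take gp.2 ++ gp.1 ++ u.drop (gp.2 + gp.1.length)

/-- The yield of a guided rewrite sequence: the final string `u_r`. -/
def rwYield {α : Type} (u : List α) (ρ : List (List α × ℕ)) : List α :=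
  ρ.foldl applyRW u

/-- A slice for a symbol `a`: a finite sequence of guide-offset pairs `(g, q)`
with `g ∈ G`, `1 ≤ q ≤ |g|` and `a ∼ g[q]` (offsets are 1-based). -/
def IsSlice {α : Type} (sim : α → α → Prop) (G : Set (List α))
    (sl : List (List α × ℕ)) (a : α) : Prop :=
  ∀ gq ∈ sl, gq.1 ∈ G ∧ 1 ≤ gq.2 ∧ gq.2 ≤ gq.1.length ∧
    ∃ b, gq.1[gq.2 - 1]? = some b ∧ sim a b

/-- The yield of a slice for the symbol `a`: the symbol `g[q]` of its last
guide-offset pair, or `a` itself if the slice is empty. -/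
def sliceYield {α : Type} (a : α) (sl : List (List α × ℕ)) : α :=
  match sl.getLast? with
  | some gq => (gq.1[gq.2 - 1]?).getD a
  | none => a

/-- A start slice: all offsets equal `1`. -/
def IsStartSlice {α : Type} (sl : List (List α × ℕ)) : Prop :=
  ∀ gq ∈ sl, gq.2 = 1

/-- An end slice: each offset equals the length of its guide. -/
def IsEndSlice {α : Type} (sl : List (List α × ℕ)) : Prop :=
  ∀ gq ∈ sl, gq.2 = gq.1.length

/-- `γ` is the cut for slices `sl` and `sl'`: a monotone partial injection from
the index set of `sl` to that of `sl'` with `γ(i) = j` iff `g_i = g'_j` and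
`q_i + 1 = q'_j`; indexes outside the domain carry the last offset of their
guide, indexes outside the range carry offset `1`. -/
def IsCut {α : Type} (sl sl' : List (List α × ℕ)) (γ : ℕ → Option ℕ) : Prop :=
  (∀ i j, γ i = some j → i < sl.length ∧ j < sl'.length) ∧
  (∀ i i' j j', γ i = some j → γ i' = some j' → i < i' → j < j') ∧
  (∀ (i : ℕ) (hi : i < sl.length) (j : ℕ) (hj : j < sl'.length),
      γ i = some j ↔
        (sl.get ⟨i, hi⟩).1 = (sl'.get ⟨j, hj⟩).1 ∧
        (sl.get ⟨i, hi⟩).2 + 1 = (sl'.get ⟨j, hj⟩).2) ∧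
  (∀ (i : ℕ) (hi : i < sl.length), γ i = none →
      (sl.get ⟨i, hi⟩).2 = (sl.get ⟨i, hi⟩).1.length) ∧
  (∀ (j : ℕ) (hj : j < sl'.length), (∀ i, γ i ≠ some j) →
      (sl'.get ⟨j, hj⟩).2 = 1)

/-- A slice sequence for `u`: one slice per position of `u`, the first being a
start slice, the last an end slice, and any two neighbouring slices being
related by a cut. -/
def IsSliceSeq {α : Type} (sim : α → α → Prop) (G : Set (List α)) (u : List α)
    (σ : List (List (List α × ℕ))) : Prop :=
  σ.length = u.length ∧
  (∀ (n : ℕ) (sl : List (List α × ℕ)) (a : α),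
      σ[n]? = some sl → u[n]? = some a → IsSlice sim G sl a) ∧
  (∀ (n : ℕ) (sl sl' : List (List α × ℕ)),
      σ[n]? = some sl → σ[n + 1]? = some sl' → ∃ γ, IsCut sl sl' γ) ∧
  (∀ sl, σ[0]? = some sl → IsStartSlice sl) ∧
  (∀ sl, σ[σ.length - 1]? = some sl → IsEndSlice sl)

/-- The yield of a slice sequence for `u`: the concatenation of the yields of
its slices (position `n` uses `u[n]` as default symbol). -/
def seqYield {α : Type} (u : List α) (σ : List (List (List α × ℕ))) : List α :=
  (u.zip σ).map (fun p => sliceYield p.1 p.2)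

/-- The set of chunks of a slice sequence `σ`: quadruples `(g, q, i, n)` where
`(g, q)` is the `i`-th guide-offset pair of the slice at (1-based) position `n`
(i.e. of `σ[n-1]` in 0-based list indexing). -/
def Chunks {α : Type} (σ : List (List (List α × ℕ))) : Set (List α × ℕ × ℕ × ℕ) :=
  {c | ∃ (n : ℕ) (sl : List (List α × ℕ)) (i : ℕ) (hi : i < sl.length),
      1 ≤ n ∧ σ[n - 1]? = some sl ∧
      c = ((sl.get ⟨i, hi⟩).1, (sl.get ⟨i, hi⟩).2, i, n)}

/-- The ordering `≼` on chunks.  Here `γ m` (for `m ≥ 1`) denotes the cut for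
the slices at 1-based positions `m` and `m + 1`.  `(g,q,i,n) ≼ (g',q',i',n')`
iff there is a zig-zag path `ℓ_0 ≤ h_0, …, ℓ_{|n'-n|} ≤ h_{|n'-n|}` through the
index sets of the intermediate slices, following the cuts from `i` to `i'`
(upward if `n ≤ n'`, downward if `n' ≤ n`). -/
def ChunkLE {α : Type} (σ : List (List (List α × ℕ))) (γ : ℕ → ℕ → Option ℕ)
    (c c' : List α × ℕ × ℕ × ℕ) : Prop :=
  match c, c' with
  | (_, _, i, n), (_, _, i', n') =>
    (n ≤ n' ∧ ∃ ℓ h : ℕ → ℕ,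
      (∀ k ≤ n' - n, ∃ sl, σ[n + k - 1]? = some sl ∧
        ℓ k < sl.length ∧ h k < sl.length ∧ ℓ k ≤ h k) ∧
      (∀ k < n' - n, γ (n + k) (h k) = some (ℓ (k + 1))) ∧
      ℓ 0 = i ∧ h (n' - n) = i') ∨
    (n' ≤ n ∧ ∃ ℓ h : ℕ → ℕ,
      (∀ k ≤ n - n', ∃ sl, σ[n' + k - 1]? = some sl ∧
        ℓ k < sl.length ∧ h k < sl.length ∧ ℓ k ≤ h k) ∧
      (∀ k < n - n', γ (n' + k) (ℓ k) = some (h (k + 1))) ∧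
      h 0 = i' ∧ ℓ (n - n') = i)

/-- The equivalence `≡` on chunks induced by the ordering `≼`. -/
def ChunkEquiv {α : Type} (σ : List (List (List α × ℕ))) (γ : ℕ → ℕ → Option ℕ)
    (c c' : List α × ℕ × ℕ × ℕ) : Prop :=
  ChunkLE σ γ c c' ∧ ChunkLE σ γ c' c

section AuxChunk
variable {α : Type}

/-- The chunk `(g, r)` sits at index `k` of the slice at 1-based position `m`. -/
def ChunkAt (σ : List (List (List α × ℕ))) (m k : ℕ) (g : List α) (r : ℕ) : Prop :=
  ∃ (sl : List (List α × ℕ)) (hk : k < sl.length),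
    σ[m - 1]? = some sl ∧ sl.get ⟨k, hk⟩ = (g, r)

lemma cut_mono_le {sl sl' : List (List α × ℕ)} {f : ℕ → Option ℕ} (hc : IsCut sl sl' f)
    {a b c d : ℕ} (ha : f a = some c) (hb : f b = some d) (hab : a ≤ b) : c ≤ d := by
  rcases Nat.lt_or_ge a b with h | h
  · exact le_of_lt (hc.2.1 a b c d ha hb h)
  · have hba : a = b := le_antisymm hab h
    subst hba
    rw [ha] at hb
    exact le_of_eq (Option.some.inj hb)

lemma cut_inj {sl sl' : List (List α × ℕ)} {f : ℕ → Option ℕ} (hc : IsCut sl sl' f)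
    {a b c : ℕ} (ha : f a = some c) (hb : f b = some c) : a = b := by
  rcases lt_trichotomy a b with h | h | h
  · exact absurd (hc.2.1 a b c c ha hb h) (lt_irrefl c)
  · exact h
  · exact absurd (hc.2.1 b a c c hb ha h) (lt_irrefl c)

variable {sim : α → α → Prop} {G : Set (List α)} {u : List α}
  {σ : List (List (List α × ℕ))} {γ : ℕ → ℕ → Option ℕ}

lemma cut_at (hγ : ∀ (n : ℕ) (sl sl' : List (List α × ℕ)),
      σ[n]? = some sl → σ[n + 1]? = some sl' → IsCut sl sl' (γ (n + 1)))
    {m : ℕ} (hm : 1 ≤ m) {sl sl' : List (List α × ℕ)}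
    (h1 : σ[m - 1]? = some sl) (h2 : σ[m]? = some sl') : IsCut sl sl' (γ m) := by
  have h2' : σ[m - 1 + 1]? = some sl' := by rw [Nat.sub_add_cancel hm]; exact h2
  have := hγ (m - 1) sl sl' h1 h2'
  rwa [Nat.sub_add_cancel hm] at this

lemma slice_valid (hσ : IsSliceSeq sim G u σ) {m : ℕ} {sl : List (List α × ℕ)}
    (h1 : σ[m]? = some sl) {gq : List α × ℕ} (hgq : gq ∈ sl) :
    1 ≤ gq.2 ∧ gq.2 ≤ gq.1.length := by
  have hm : m < σ.length := by
    rcases List.getElem?_eq_some_iff.mp h1 with ⟨h, _⟩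
    exact h
  have hmu : m < u.length := hσ.1 ▸ hm
  have hu : u[m]? = some (u[m]'hmu) := List.getElem?_eq_getElem hmu
  have := hσ.2.1 m sl _ h1 hu gq hgq
  exact ⟨this.2.1, this.2.2.1⟩
end AuxChunk
section AuxStep
variable {α : Type} {sim : α → α → Prop} {G : Set (List α)} {u : List α}
  {σ : List (List (List α × ℕ))} {γ : ℕ → ℕ → Option ℕ}

lemma step_fwd (hσ : IsSliceSeq sim G u σ)
    (hγ : ∀ (n : ℕ) (sl sl' : List (List α × ℕ)),
      σ[n]? = some sl → σ[n + 1]? = some sl' → IsCut sl sl' (γ (n + 1)))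
    {m k : ℕ} {g : List α} {r : ℕ}
    (h : ChunkAt σ m k g r) (hm : 1 ≤ m) (hr : r < g.length) :
    ∃ k', γ m k = some k' ∧ ChunkAt σ (m + 1) k' g (r + 1) := by
  obtain ⟨sl, hk, hsl, hget⟩ := h
  have hm1 : m - 1 < σ.length := (List.getElem?_eq_some_iff.mp hsl).1
  have hmem : sl.get ⟨k, hk⟩ ∈ sl := List.get_mem sl ⟨k, hk⟩
  have hmne : m ≠ σ.length := by
    intro he
    have hend := hσ.2.2.2.2 sl (by rw [← he]; exact hsl)
    have := hend _ hmem
    rw [hget] at this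
    simp at this
    omega
  have hmlt : m < σ.length := by omega
  have hsl' : σ[m]? = some (σ[m]'hmlt) := List.getElem?_eq_getElem hmlt
  set sl' := σ[m]'hmlt with hsl'def
  have hc := cut_at hγ hm hsl hsl'
  cases hj : γ m k with
  | none =>
    have := hc.2.2.2.1 k hk hj
    rw [hget] at this
    simp at this
    omega
  | some k' =>
    have hk' : k' < sl'.length := (hc.1 k k' hj).2
    have hiff := (hc.2.2.1 k hk k' hk').mp hj
    rw [hget] at hiff
    refine ⟨k', rfl, ⟨sl', hk', by simpa using hsl', ?_⟩⟩
    have h1 : (sl'.get ⟨k', hk'⟩).1 = g := hiff.1.symm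
    have h2 : (sl'.get ⟨k', hk'⟩).2 = r + 1 := hiff.2.symm
    exact Prod.ext h1 h2

lemma step_bwd (hσ : IsSliceSeq sim G u σ)
    (hγ : ∀ (n : ℕ) (sl sl' : List (List α × ℕ)),
      σ[n]? = some sl → σ[n + 1]? = some sl' → IsCut sl sl' (γ (n + 1)))
    {m k : ℕ} {g : List α} {r : ℕ}
    (h : ChunkAt σ m k g r) (hm : 1 ≤ m) (hr : 2 ≤ r) :
    2 ≤ m ∧ ∃ k', γ (m - 1) k' = some k ∧ ChunkAt σ (m - 1) k' g (r - 1) := by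
  obtain ⟨sl, hk, hsl, hget⟩ := h
  have hm1 : m - 1 < σ.length := (List.getElem?_eq_some_iff.mp hsl).1
  have hmem : sl.get ⟨k, hk⟩ ∈ sl := List.get_mem sl ⟨k, hk⟩
  have hm2 : 2 ≤ m := by
    by_contra hlt
    have hme : m = 1 := by omega
    have hstart := hσ.2.2.2.1 sl (by rw [hme] at hsl; simpa using hsl)
    have := hstart _ hmem
    rw [hget] at this
    simp at this
    omega
  have hm2' : m - 2 < σ.length := by omega
  have hsl'' : σ[m-2]? = some (σ[m-2]'hm2') := List.getElem?_eq_getElem hm2'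
  set sl'' := σ[m-2]'hm2' with hsl''def
  have e1 : (m - 1) - 1 = m - 2 := by omega
  have hsl1 : σ[(m-1) - 1]? = some sl'' := by rw [e1]; exact hsl''
  have hsl2 : σ[m-1]? = some sl := hsl
  have hc : IsCut sl'' sl (γ (m - 1)) := cut_at hγ (by omega) hsl1 hsl2
  have hex : ∃ k', γ (m - 1) k' = some k := by
    by_contra hne
    push_neg at hne
    have := hc.2.2.2.2 k hk hne
    rw [hget] at this
    simp at this
    omega
  obtain ⟨k', hjk⟩ := hex
  have hk' : k' < sl''.length := (hc.1 k' k hjk).1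
  have hiff := (hc.2.2.1 k' hk' k hk).mp hjk
  rw [hget] at hiff
  refine ⟨hm2, k', hjk, sl'', hk', hsl1, ?_⟩
  have h1 : (sl''.get ⟨k', hk'⟩).1 = g := hiff.1
  have h2 : (sl''.get ⟨k', hk'⟩).2 = r - 1 := by omega
  exact Prod.ext h1 h2

lemma offset_le_pos (hσ : IsSliceSeq sim G u σ)
    (hγ : ∀ (n : ℕ) (sl sl' : List (List α × ℕ)),
      σ[n]? = some sl → σ[n + 1]? = some sl' → IsCut sl sl' (γ (n + 1))) :
    ∀ (r m k : ℕ) (g : List α), ChunkAt σ m k g r → 1 ≤ m → r ≤ m := by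
  intro r
  induction r with
  | zero => intro m k g _ hm; omega
  | succ r ih =>
    intro m k g h hm
    rcases Nat.lt_or_ge r 1 with hr | hr
    · omega
    · obtain ⟨hm2, k', _, h'⟩ := step_bwd hσ hγ h hm (by omega)
      have := ih (m - 1) k' g (by simpa using h') (by omega)
      omega
end AuxStep
/-- Forward chain of indexes following the cuts, starting at index `i` at 1-based position `n`. -/
noncomputable def fwdChain (γ : ℕ → ℕ → Option ℕ) (n i : ℕ) : ℕ → ℕ
  | 0 => i
  | t + 1 => (γ (n + t) (fwdChain γ n i t)).getD 0

/-- Backward chain of indexes following the cuts, starting at index `i` at 1-based position `n`. -/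
noncomputable def bwdChain (γ : ℕ → ℕ → Option ℕ) (n i : ℕ) : ℕ → ℕ
  | 0 => i
  | t + 1 => Classical.epsilon (fun k' => γ (n - t - 1) k' = some (bwdChain γ n i t))

section AuxChain
variable {α : Type} {sim : α → α → Prop} {G : Set (List α)} {u : List α}
  {σ : List (List (List α × ℕ))} {γ : ℕ → ℕ → Option ℕ}

variable (hσ : IsSliceSeq sim G u σ)
  (hγ : ∀ (n : ℕ) (sl sl' : List (List α × ℕ)),
      σ[n]? = some sl → σ[n + 1]? = some sl' → IsCut sl sl' (γ (n + 1)))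
  {n i q : ℕ} {g : List α}
  (hxC : ChunkAt σ n i g q) (hn : 1 ≤ n) (hq1 : 1 ≤ q) (hqg : q ≤ g.length) (hqn : q ≤ n)

include hσ hγ hxC hn in
lemma fwd_inv : ∀ t, q + t ≤ g.length → ChunkAt σ (n + t) (fwdChain γ n i t) g (q + t) := by
  intro t
  induction t with
  | zero => intro _; simpa [fwdChain] using hxC
  | succ t ih =>
    intro ht
    obtain ⟨k', hk'γ, hC⟩ := step_fwd hσ hγ (ih (by omega)) (by omega) (by omega)
    have he : fwdChain γ n i (t + 1) = k' := by
      simp [fwdChain, hk'γ]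
    rw [he]
    have e : n + t + 1 = n + (t + 1) := by omega
    rwa [e] at hC

include hσ hγ hxC hn in
lemma fwd_rel : ∀ t, q + t < g.length → γ (n + t) (fwdChain γ n i t) = some (fwdChain γ n i (t + 1)) := by
  intro t ht
  obtain ⟨k', hk'γ, _⟩ := step_fwd hσ hγ (fwd_inv hσ hγ hxC hn t (by omega)) (by omega) ht
  have he : fwdChain γ n i (t + 1) = k' := by simp [fwdChain, hk'γ]
  rw [he]; exact hk'γ

include hσ hγ hxC hn hq1 hqn in
lemma bwd_inv : ∀ t, t < q → ChunkAt σ (n - t) (bwdChain γ n i t) g (q - t) ∧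
    (1 ≤ t → γ (n - t) (bwdChain γ n i t) = some (bwdChain γ n i (t - 1))) := by
  intro t
  induction t with
  | zero => intro _; exact ⟨by simpa [bwdChain] using hxC, by omega⟩
  | succ t ih =>
    intro ht
    obtain ⟨hC, _⟩ := ih (by omega)
    obtain ⟨hm2, k', hk'γ, hC'⟩ := step_bwd hσ hγ hC (by omega) (by omega)
    have hC'c := hC'
    -- bwdChain (t+1) is an epsilon for the predicate witnessed by k'
    have hex : ∃ k'', γ (n - t - 1) k'' = some (bwdChain γ n i t) := ⟨k', hk'γ⟩
    have hspec : γ (n - t - 1) (bwdChain γ n i (t + 1)) = some (bwdChain γ n i t) := by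
      have := Classical.epsilon_spec hex
      simpa [bwdChain] using this
    -- identify with k' via injectivity of the cut
    obtain ⟨sl', hk'lt, hsl', _⟩ := hC'c
    obtain ⟨sl, hklt, hsl, _⟩ := hC
    have hsl2 : σ[(n - t - 1)]? = some sl := by
      have e : n - t - 1 = (n - t) - 1 := by omega
      rw [e]; exact hsl
    have hsl1 : σ[(n - t - 1) - 1]? = some sl' := by
      have e : (n - t - 1) - 1 = ((n - t) - 1) - 1 := by omega
      rw [e]; exact hsl'
    have hcut : IsCut sl' sl (γ (n - t - 1)) := cut_at hγ (by omega) hsl1 hsl2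
    have heq : bwdChain γ n i (t + 1) = k' := cut_inj hcut hspec hk'γ
    constructor
    · rw [heq]
      have e1 : n - (t + 1) = (n - t) - 1 := by omega
      have e2 : q - (t + 1) = (q - t) - 1 := by omega
      rw [e1, e2]; exact hC'
    · intro _
      have e1 : n - (t + 1) = n - t - 1 := by omega
      have e2 : (t + 1) - 1 = t := by omega
      rw [e1, e2]; exact hspec
end AuxChain
/-- The indexes of the occurrence of `g` through positions `n-q+1, …, n-q+|g|`. -/
noncomputable def jfun (γ : ℕ → ℕ → Option ℕ) (n i q : ℕ) (s : ℕ) : ℕ :=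
  if s ≤ q then bwdChain γ n i (q - s) else fwdChain γ n i (s - q)

section AuxEquiv
variable {α : Type} {σ : List (List (List α × ℕ))} {γ : ℕ → ℕ → Option ℕ}

lemma chain_equiv {a b : ℕ} (hab : a ≤ b) (c : ℕ → ℕ)
    (hsl : ∀ k ≤ b - a, ∃ sl : List (List α × ℕ), σ[a + k - 1]? = some sl ∧ c k < sl.length)
    (hrel : ∀ k < b - a, γ (a + k) (c k) = some (c (k + 1)))
    {i0 iN : ℕ} (h0 : c 0 = i0) (hN : c (b - a) = iN)
    (g1 g2 : List α) (q1 q2 : ℕ) :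
    ChunkLE σ γ (g1, q1, i0, a) (g2, q2, iN, b) ∧
    ChunkLE σ γ (g2, q2, iN, b) (g1, q1, i0, a) := by
  subst h0 hN
  constructor
  · exact Or.inl ⟨hab, c, c,
      fun k hk => (hsl k hk).imp (fun sl h => ⟨h.1, h.2, h.2, le_refl _⟩), hrel, rfl, rfl⟩
  · exact Or.inr ⟨hab, c, c,
      fun k hk => (hsl k hk).imp (fun sl h => ⟨h.1, h.2, h.2, le_refl _⟩), hrel, rfl, rfl⟩
end AuxEquiv

/-- Let `x = (g, q, i, n)` be a chunk of a slice sequence `σ`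
and put `p = n - q`.  Then there are indexes `j_1 ∈ I_{p+1}, …, j_{|g|} ∈
I_{p+|g|}` such that the equivalence class of `x` is exactly
`[x] = { (g, s, j_s, p + s) | 1 ≤ s ≤ |g| }`. -/
theorem chunk_equivalence_class_form
    {α : Type} [Fintype α] (sim : α → α → Prop) (hsim : Equivalence sim)
    (G : Set (List α)) (hG : G.Finite) (u : List α)
    (σ : List (List (List α × ℕ))) (hσ : IsSliceSeq sim G u σ)
    (γ : ℕ → ℕ → Option ℕ)
    (hγ : ∀ (n : ℕ) (sl sl' : List (List α × ℕ)),
      σ[n]? = some sl → σ[n + 1]? = some sl' → IsCut sl sl' (γ (n + 1)))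
    (g : List α) (q i n : ℕ) (hx : (g, q, i, n) ∈ Chunks σ) :
    ∃ j : ℕ → ℕ,
      (∀ s, 1 ≤ s → s ≤ g.length →
        ∃ sl, σ[(n - q) + s - 1]? = some sl ∧ j s < sl.length) ∧
      {y | y ∈ Chunks σ ∧ ChunkEquiv σ γ (g, q, i, n) y} =
        {y | ∃ s, 1 ≤ s ∧ s ≤ g.length ∧ y = (g, s, j s, (n - q) + s)} := by
  classical
  obtain ⟨n₀, sl₀, i₀, hi₀, hn₀, hsl₀, heq⟩ := hx
  obtain ⟨h1, h2, h3, h4⟩ : g = (sl₀.get ⟨i₀, hi₀⟩).1 ∧ q = (sl₀.get ⟨i₀, hi₀⟩).2 ∧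
      i = i₀ ∧ n = n₀ := by
    simpa [Prod.ext_iff] using heq
  subst h3 h4
  have hxC : ChunkAt σ n i g q := ⟨sl₀, hi₀, hsl₀, Prod.ext h1.symm h2.symm⟩
  have hn : 1 ≤ n := hn₀
  have hv := slice_valid hσ hsl₀ (List.get_mem sl₀ ⟨i, hi₀⟩)
  have hq1 : 1 ≤ q := by omega
  have hqg : q ≤ g.length := by rw [h1]; omega
  have hqn : q ≤ n := offset_le_pos hσ hγ q n i g hxC hn
  clear h1 h2 hv heq hsl₀ hi₀ hn₀
  refine ⟨jfun γ n i q, ?_, ?_⟩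
  · -- the indexes exist
    intro s hs1 hs2
    by_cases hsq : s ≤ q
    · obtain ⟨sl, hk, hsl, -⟩ := (bwd_inv hσ hγ hxC hn hq1 hqn (q - s) (by omega)).1
      refine ⟨sl, ?_, ?_⟩
      · have e : (n - q) + s - 1 = n - (q - s) - 1 := by omega
        rw [e]; exact hsl
      · rw [jfun, if_pos hsq]; exact hk
    · obtain ⟨sl, hk, hsl, -⟩ := fwd_inv hσ hγ hxC hn (s - q) (by omega)
      refine ⟨sl, ?_, ?_⟩
      · have e : (n - q) + s - 1 = n + (s - q) - 1 := by omega
        rw [e]; exact hsl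
      · rw [jfun, if_neg hsq]; exact hk
  · ext y
    simp only [Set.mem_setOf_eq]
    constructor
    · -- hard direction
      rintro ⟨hyC, hyE⟩
      obtain ⟨g₂, q₂, i₂, n₂⟩ := y
      obtain ⟨m₂, sl₂, k₂, hk₂, hm₂, hsl₂, heq₂⟩ := hyC
      obtain ⟨e1, e2, e3, e4⟩ : g₂ = (sl₂.get ⟨k₂, hk₂⟩).1 ∧ q₂ = (sl₂.get ⟨k₂, hk₂⟩).2 ∧
          i₂ = k₂ ∧ n₂ = m₂ := by simpa [Prod.ext_iff] using heq₂
      subst e3 e4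
      have hyCat : ChunkAt σ n₂ i₂ g₂ q₂ := ⟨sl₂, hk₂, hsl₂, Prod.ext e1.symm e2.symm⟩
      have hn₂ : 1 ≤ n₂ := hm₂
      have hv₂ := slice_valid hσ hsl₂ (List.get_mem sl₂ ⟨i₂, hk₂⟩)
      have hq₂1 : 1 ≤ q₂ := by omega
      have hq₂g : q₂ ≤ g₂.length := by rw [e1]; omega
      clear e1 e2 hv₂ heq₂ hsl₂ hk₂ hm₂
      rcases lt_trichotomy n n₂ with hlt | hE | hgt
      · -- n < n₂ : forward
        obtain ⟨hxy, hyx⟩ := hyE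
        rcases hxy with ⟨-, ℓ, h, hslk, hrel, hl0, hhN⟩ | ⟨hle, -⟩
        · rcases hyx with ⟨hle', -⟩ | ⟨-, ℓ', h', hslk', hrel', hh0, hlN⟩
          · omega
          · set N := n₂ - n with hNdef
            have hN1 : 1 ≤ N := by omega
            have cutk : ∀ k, k < N → ∃ sl sl', σ[n + k - 1]? = some sl ∧
                σ[n + k]? = some sl' ∧ IsCut sl sl' (γ (n + k)) := by
              intro k hk
              obtain ⟨sl, hsl, -, -, -⟩ := hslk k (by omega)
              obtain ⟨sl', hsl', -, -, -⟩ := hslk (k + 1) (by omega)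
              have e : n + (k + 1) - 1 = n + k := by omega
              rw [e] at hsl'
              exact ⟨sl, sl', hsl, hsl', cut_at hγ (by omega) hsl hsl'⟩
            have claimA : ∀ k, k ≤ N → ℓ' k ≤ h' k ∧ h' k ≤ ℓ k ∧ ℓ k ≤ h k := by
              intro k
              induction k with
              | zero =>
                intro _
                obtain ⟨sl, -, -, -, hle1⟩ := hslk' 0 (by omega)
                obtain ⟨sl2, -, -, -, hle2⟩ := hslk 0 (by omega)
                exact ⟨hle1, by omega, hle2⟩
              | succ k ih =>
                intro hk
                have hA := ih (by omega)
                obtain ⟨sl, sl', hsl, hsl', hc⟩ := cutk k (by omega)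
                have h1 := hrel' k (by omega)
                have h2 := hrel k (by omega)
                have hmid : h' (k + 1) ≤ ℓ (k + 1) := cut_mono_le hc h1 h2 (by omega)
                obtain ⟨sl3, -, -, -, hle1⟩ := hslk' (k + 1) (by omega)
                obtain ⟨sl4, -, -, -, hle2⟩ := hslk (k + 1) (by omega)
                exact ⟨hle1, hmid, hle2⟩
            have claimEqN : ℓ' N = h' N ∧ h' N = ℓ N ∧ ℓ N = h N := by
              have hA := claimA N le_rfl
              omega
            have claimBd : ∀ d, d ≤ N →
                ℓ' (N - d) = h' (N - d) ∧ h' (N - d) = ℓ (N - d) ∧ ℓ (N - d) = h (N - d) := by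
              intro d
              induction d with
              | zero => intro _; simpa using claimEqN
              | succ d ih =>
                intro hd
                have hP := ih (by omega)
                have hk1 : N - d = (N - (d + 1)) + 1 := by omega
                rw [hk1] at hP
                obtain ⟨sl, sl', hsl, hsl', hc⟩ := cutk (N - (d + 1)) (by omega)
                have h1 := hrel' (N - (d + 1)) (by omega)
                have h2 := hrel (N - (d + 1)) (by omega)
                rw [hP.2.1] at h1
                have hlh : ℓ' (N - (d + 1)) = h (N - (d + 1)) := cut_inj hc h1 h2
                have hA := claimA (N - (d + 1)) (by omega)
                omega
            have claimB : ∀ k, k ≤ N →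
                ℓ' k = h' k ∧ h' k = ℓ k ∧ ℓ k = h k := by
              intro k hk
              have := claimBd (N - k) (by omega)
              rwa [show N - (N - k) = k by omega] at this
            have claimC : ∀ k, k ≤ N →
                ChunkAt σ (n + k) (h k) g (q + k) ∧ h k = fwdChain γ n i k := by
              intro k
              induction k with
              | zero =>
                intro _
                have h0eq : h 0 = i := by have := claimB 0 (by omega); omega
                constructor
                · rw [h0eq]; simpa using hxC
                · rw [h0eq]; rfl
              | succ k ih =>
                intro hk
                obtain ⟨hCk, hfk⟩ := ih (by omega)
                have h2 := hrel k (by omega)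
                have hB := claimB (k + 1) (by omega)
                rw [hB.2.2] at h2
                obtain ⟨slk, hlt', hslk0, hgetk⟩ := hCk
                obtain ⟨sl', hsl'0, -, hhlt', -⟩ := hslk (k + 1) (by omega)
                have e : n + (k + 1) - 1 = n + k := by omega
                rw [e] at hsl'0
                have hc : IsCut slk sl' (γ (n + k)) := cut_at hγ (by omega) hslk0 hsl'0
                have hiff := (hc.2.2.1 (h k) hlt' (h (k + 1)) hhlt').mp h2
                rw [hgetk] at hiff
                constructor
                · refine ⟨sl', hhlt', ?_, ?_⟩
                  · show σ[n + (k + 1) - 1]? = some sl'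
                    rw [e]; exact hsl'0
                  · refine Prod.ext hiff.1.symm ?_
                    have := hiff.2
                    simp only at this ⊢
                    omega
                · show h (k + 1) = fwdChain γ n i (k + 1)
                  have hfe : fwdChain γ n i (k + 1) = (γ (n + k) (fwdChain γ n i k)).getD 0 := by
                    simp [fwdChain]
                  rw [hfe, ← hfk, h2]
                  rfl
            obtain ⟨hCN, hfN⟩ := claimC N le_rfl
            rw [hhN] at hCN hfN
            have en : n + N = n₂ := by omega
            rw [en] at hCN
            obtain ⟨sl, hk, hsl, hget⟩ := hCN
            obtain ⟨sl', hk', hsl', hget'⟩ := hyCat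
            rw [hsl] at hsl'
            injection hsl' with hslE
            subst hslE
            have hpq : (g₂, q₂) = (g, q + N) := hget'.symm.trans hget
            injection hpq with hg2 hq2
            refine ⟨q + N, by omega, ?_, ?_⟩
            · rw [← hq2, ← hg2] at *; exact hq₂g
            · have hj : jfun γ n i q (q + N) = i₂ := by
                rw [jfun, if_neg (by omega), show q + N - q = N by omega]
                exact hfN.symm
              simp only [Prod.mk.injEq]
              exact ⟨hg2, hq2, hj.symm, by omega⟩
        · omega
      · -- n = n₂
        subst hE
        have hii : i ≤ i₂ := by
          rcases hyE.1 with ⟨-, ℓ, h, hslk, -, hl0, hhN⟩ | ⟨-, ℓ, h, hslk, -, hh0, hlN⟩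
          · obtain ⟨sl, -, -, -, hle⟩ := hslk 0 (by omega)
            rw [Nat.sub_self] at hhN
            omega
          · obtain ⟨sl, -, -, -, hle⟩ := hslk 0 (by omega)
            rw [Nat.sub_self] at hlN
            omega
        have hii' : i₂ ≤ i := by
          rcases hyE.2 with ⟨-, ℓ, h, hslk, -, hl0, hhN⟩ | ⟨-, ℓ, h, hslk, -, hh0, hlN⟩
          · obtain ⟨sl, -, -, -, hle⟩ := hslk 0 (by omega)
            rw [Nat.sub_self] at hhN
            omega
          · obtain ⟨sl, -, -, -, hle⟩ := hslk 0 (by omega)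
            rw [Nat.sub_self] at hlN
            omega
        have hieq : i₂ = i := by omega
        subst hieq
        obtain ⟨sl, hk, hsl, hget⟩ := hxC
        obtain ⟨sl', hk', hsl', hget'⟩ := hyCat
        rw [hsl] at hsl'
        injection hsl' with hslE
        subst hslE
        have hpq : (g₂, q₂) = (g, q) := hget'.symm.trans hget
        injection hpq with hg2 hq2
        refine ⟨q, hq1, hqg, ?_⟩
        have hj : jfun γ n i₂ q q = i₂ := by
          rw [jfun, if_pos le_rfl, Nat.sub_self]
          rfl
        simp only [Prod.mk.injEq]
        exact ⟨hg2, hq2, hj.symm, by omega⟩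
      · -- n₂ < n : backward
        obtain ⟨hxy, hyx⟩ := hyE
        rcases hxy with ⟨hle, -⟩ | ⟨-, ℓ, h, hslk, hrel, hh0, hlN⟩
        · omega
        · rcases hyx with ⟨-, ℓ', h', hslk', hrel', hl0', hhN'⟩ | ⟨hle', -⟩
          · set N := n - n₂ with hNdef
            have hN1 : 1 ≤ N := by omega
            have cutk : ∀ k, k < N → ∃ sl sl', σ[n₂ + k - 1]? = some sl ∧
                σ[n₂ + k]? = some sl' ∧ IsCut sl sl' (γ (n₂ + k)) := by
              intro k hk
              obtain ⟨sl, hsl, -, -, -⟩ := hslk k (by omega)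
              obtain ⟨sl', hsl', -, -, -⟩ := hslk (k + 1) (by omega)
              have e : n₂ + (k + 1) - 1 = n₂ + k := by omega
              rw [e] at hsl'
              exact ⟨sl, sl', hsl, hsl', cut_at hγ (by omega) hsl hsl'⟩
            have claimA : ∀ k, k ≤ N → ℓ k ≤ h k ∧ h k ≤ ℓ' k ∧ ℓ' k ≤ h' k := by
              intro k
              induction k with
              | zero =>
                intro _
                obtain ⟨sl, -, -, -, hle1⟩ := hslk 0 (by omega)
                obtain ⟨sl2, -, -, -, hle2⟩ := hslk' 0 (by omega)
                exact ⟨hle1, by omega, hle2⟩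
              | succ k ih =>
                intro hk
                have hA := ih (by omega)
                obtain ⟨sl, sl', hsl, hsl', hc⟩ := cutk k (by omega)
                have h1 := hrel k (by omega)
                have h2 := hrel' k (by omega)
                have hmid : h (k + 1) ≤ ℓ' (k + 1) := cut_mono_le hc h1 h2 (by omega)
                obtain ⟨sl3, -, -, -, hle1⟩ := hslk (k + 1) (by omega)
                obtain ⟨sl4, -, -, -, hle2⟩ := hslk' (k + 1) (by omega)
                exact ⟨hle1, hmid, hle2⟩
            have claimEqN : ℓ N = h N ∧ h N = ℓ' N ∧ ℓ' N = h' N := by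
              have hA := claimA N le_rfl
              omega
            have claimBd : ∀ d, d ≤ N →
                ℓ (N - d) = h (N - d) ∧ h (N - d) = ℓ' (N - d) ∧ ℓ' (N - d) = h' (N - d) := by
              intro d
              induction d with
              | zero => intro _; simpa using claimEqN
              | succ d ih =>
                intro hd
                have hP := ih (by omega)
                have hk1 : N - d = (N - (d + 1)) + 1 := by omega
                rw [hk1] at hP
                obtain ⟨sl, sl', hsl, hsl', hc⟩ := cutk (N - (d + 1)) (by omega)
                have h1 := hrel (N - (d + 1)) (by omega)
                have h2 := hrel' (N - (d + 1)) (by omega)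
                rw [hP.2.1] at h1
                have hlh : ℓ (N - (d + 1)) = h' (N - (d + 1)) := cut_inj hc h1 h2
                have hA := claimA (N - (d + 1)) (by omega)
                omega
            have claimB : ∀ k, k ≤ N →
                ℓ k = h k ∧ h k = ℓ' k ∧ ℓ' k = h' k := by
              intro k hk
              have := claimBd (N - k) (by omega)
              rwa [show N - (N - k) = k by omega] at this
            have claimC : ∀ k, k ≤ N → ChunkAt σ (n₂ + k) (ℓ k) g₂ (q₂ + k) := by
              intro k
              induction k with
              | zero =>
                intro _
                have h0eq : ℓ 0 = i₂ := by have := claimB 0 (by omega); omega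
                rw [h0eq]; simpa using hyCat
              | succ k ih =>
                intro hk
                have hCk := ih (by omega)
                have h2 := hrel k (by omega)
                have hB := claimB (k + 1) (by omega)
                rw [← hB.1] at h2
                obtain ⟨slk, hlt', hslk0, hgetk⟩ := hCk
                obtain ⟨sl', hsl'0, hllt', -, -⟩ := hslk (k + 1) (by omega)
                have e : n₂ + (k + 1) - 1 = n₂ + k := by omega
                rw [e] at hsl'0
                have hc : IsCut slk sl' (γ (n₂ + k)) := cut_at hγ (by omega) hslk0 hsl'0
                have hiff := (hc.2.2.1 (ℓ k) hlt' (ℓ (k + 1)) hllt').mp h2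
                rw [hgetk] at hiff
                refine ⟨sl', hllt', ?_, ?_⟩
                · show σ[n₂ + (k + 1) - 1]? = some sl'
                  rw [e]; exact hsl'0
                · refine Prod.ext hiff.1.symm ?_
                  have := hiff.2
                  simp only at this ⊢
                  omega
            have claimD : ∀ t, t ≤ N → bwdChain γ n i t = ℓ (N - t) := by
              intro t
              induction t with
              | zero => intro _; rw [Nat.sub_zero, hlN]; rfl
              | succ t ih =>
                intro ht
                have ihd := ih (by omega)
                have hkN : N - t - 1 < N := by omega
                have h1 := hrel (N - t - 1) (by omega)
                have e0 : N - t - 1 + 1 = N - t := by omega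
                rw [e0] at h1
                have hB := claimB (N - t) (by omega)
                rw [← hB.1, ← ihd] at h1
                have e1 : n₂ + (N - t - 1) = n - t - 1 := by omega
                rw [e1] at h1
                have hex : ∃ k', γ (n - t - 1) k' = some (bwdChain γ n i t) :=
                  ⟨ℓ (N - t - 1), h1⟩
                have hspec : γ (n - t - 1) (bwdChain γ n i (t + 1)) =
                    some (bwdChain γ n i t) := by
                  have := Classical.epsilon_spec hex
                  simpa [bwdChain] using this
                obtain ⟨sl, sl', hsl, hsl', hc⟩ := cutk (N - t - 1) hkN
                rw [e1] at hc
                have heq := cut_inj hc hspec h1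
                rw [show N - (t + 1) = N - t - 1 by omega]
                exact heq
            have hCN := claimC N le_rfl
            rw [hlN] at hCN
            rw [show n₂ + N = n by omega] at hCN
            obtain ⟨sl, hk, hsl, hget⟩ := hCN
            have hxCc := hxC
            obtain ⟨sl', hk', hsl', hget'⟩ := hxCc
            rw [hsl] at hsl'
            injection hsl' with hslE
            subst hslE
            have hpq : (g, q) = (g₂, q₂ + N) := hget'.symm.trans hget
            injection hpq with hg2 hq2
            refine ⟨q₂, hq₂1, by omega, ?_⟩
            have hj : jfun γ n i q q₂ = i₂ := by
              rw [jfun, if_pos (by omega), show q - q₂ = N by omega]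
              have hD := claimD N le_rfl
              rw [hD, Nat.sub_self]
              have hB := claimB 0 (by omega)
              omega
            have hn2e : n₂ = n - q + q₂ := by omega
            rw [hg2, hj, ← hn2e]
          · omega
    · -- easy direction
      rintro ⟨s, hs1, hs2, rfl⟩
      have hCs : ChunkAt σ ((n - q) + s) (jfun γ n i q s) g s := by
        by_cases hsq : s ≤ q
        · have hb := (bwd_inv hσ hγ hxC hn hq1 hqn (q - s) (by omega)).1
          rw [jfun, if_pos hsq]
          have e1 : n - (q - s) = (n - q) + s := by omega
          have e2 : q - (q - s) = s := by omega
          rwa [e1, e2] at hb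
        · have hf := fwd_inv hσ hγ hxC hn (s - q) (by omega)
          rw [jfun, if_neg hsq]
          have e1 : n + (s - q) = (n - q) + s := by omega
          have e2 : q + (s - q) = s := by omega
          rwa [e1, e2] at hf
      constructor
      · -- membership in Chunks
        obtain ⟨sl, hk, hsl, hget⟩ := hCs
        exact ⟨(n - q) + s, sl, jfun γ n i q s, hk, by omega, hsl, by rw [hget]⟩
      · -- equivalence
        by_cases hsq : s ≤ q
        · -- backward chain from x down to position (n-q)+s
          have hab : (n - q) + s ≤ n := by omega
          have key := chain_equiv (σ := σ) (γ := γ) hab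
            (fun k => bwdChain γ n i (q - s - k))
            (by
              intro k hk
              have hkk : k ≤ q - s := by omega
              obtain ⟨sl, hlt, hsl, -⟩ :=
                (bwd_inv hσ hγ hxC hn hq1 hqn (q - s - k) (by omega)).1
              refine ⟨sl, ?_, hlt⟩
              have e : (n - q) + s + k - 1 = n - (q - s - k) - 1 := by omega
              rw [e]; exact hsl)
            (by
              intro k hk
              have hkk : k < q - s := by omega
              have hrel := (bwd_inv hσ hγ hxC hn hq1 hqn (q - s - k) (by omega)).2
                (by omega)
              have e1 : n - (q - s - k) = (n - q) + s + k := by omega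
              have e2 : q - s - k - 1 = q - s - (k + 1) := by omega
              rw [e1, e2] at hrel
              exact hrel)
            (i0 := jfun γ n i q s) (iN := i)
            (by simp only [Nat.sub_zero]; rw [jfun, if_pos hsq])
            (by
              have e : q - s - (n - ((n - q) + s)) = 0 := by omega
              show bwdChain γ n i (q - s - (n - ((n - q) + s))) = i
              rw [e]
              simp [bwdChain])
            g g s q
          exact ⟨key.2, key.1⟩
        · -- forward chain from x up to position (n-q)+s
          have hab : n ≤ (n - q) + s := by omega
          have key := chain_equiv (σ := σ) (γ := γ) hab (fwdChain γ n i)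
            (by
              intro k hk
              have hkk : k ≤ s - q := by omega
              obtain ⟨sl, hlt, hsl, -⟩ := fwd_inv hσ hγ hxC hn k (by omega)
              exact ⟨sl, hsl, hlt⟩)
            (by
              intro k hk
              exact fwd_rel hσ hγ hxC hn k (by omega))
            (i0 := i) (iN := jfun γ n i q s)
            rfl
            (by
              have e : (n - q) + s - n = s - q := by omega
              rw [e, jfun, if_neg hsq])
            g g q s
          exact key
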